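/- Every nonempty pp-irreducible string w is uniquely factorized as w = w₁ w₂ ⋯ w_k into nonempty strings such that, writing b₀ = 0 and b_i = |w₁ ⋯ w_i|, one has 𝓕_w(b_{i−1} + 1) = b_i for every i ∈ [1:k]; moreover, for every position c with b_{i−1} < c ≤ b_i, the originator satisfies 𝓐_w(c) = b_{i−1} + 1. -/

import Mathlib

/-!
Common definitions: strings as `List α` over an alphabet `α`, 1-based positions.
-/

variable {α : Type*}

/-- The substring `w[i:j]` (1-based, inclusive; empty when `j < i`). -/
def seg (w : List α) (i j : ℕ) : List α := (w.take j).drop (i - 1)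

/-- `w` has an even palindrome of radius `r` centered at position `c`:
`r ≤ c`, `c + r ≤ |w|` and `w[c−k+1] = w[c+k]` for all `1 ≤ k ≤ r`
(here expressed with 0-based list indexing: `w[c−k]? = w[c+k−1]?`). -/
def PalAt (w : List α) (c r : ℕ) : Prop :=
  r ≤ c ∧ c + r ≤ w.length ∧ ∀ k, 1 ≤ k → k ≤ r → w[c - k]? = w[c + k - 1]?

/-- `ρ_w(c)`: the maximal even-palindrome radius at center `c`. -/
noncomputable def rho (w : List α) (c : ℕ) : ℕ := sSup {r | PalAt w c r}

/-- The reduction relation: `x y yᴿ y z → x y z` for nonempty `y`. -/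
def Reduces (w w' : List α) : Prop :=
  ∃ x y z : List α, y ≠ [] ∧ w = x ++ y ++ y.reverse ++ y ++ z ∧ w' = x ++ y ++ z

/-- A string is irreducible if no reduction applies to it. -/
def ZIrreducible (w : List α) : Prop := ∀ w', ¬ Reduces w w'

def ZReducible (w : List α) : Prop := ∃ w', Reduces w w'

/-- `w` is pp-irreducible if its longest proper prefix `w[1:|w|−1]` is irreducible. -/
def PPIrreducible (w : List α) : Prop := ZIrreducible w.dropLast

/-- `w` is ss-reducible if it is reducible and pp-irreducible. -/
def SSReducible (w : List α) : Prop := ZReducible w ∧ PPIrreducible w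

/-- A Z-shape occurrence `⟨p1, p2⟩` in `w`: with `s = p2 − p1 ≥ 1`, `p1 − s ≥ 0`,
`p2 + s ≤ |w|` and `w[p1−s+1 : p2+s] = x xᴿ x` where `x = w[p1−s+1 : p1]`. -/
def ZOcc (w : List α) (p1 p2 : ℕ) : Prop :=
  p1 < p2 ∧ p2 - p1 ≤ p1 ∧ p2 + (p2 - p1) ≤ w.length ∧
    seg w (p1 - (p2 - p1) + 1) (p2 + (p2 - p1)) =
      seg w (p1 - (p2 - p1) + 1) p1 ++ (seg w (p1 - (p2 - p1) + 1) p1).reverse ++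
        seg w (p1 - (p2 - p1) + 1) p1

/-- `c ⊏_w d` : `c ≤ d − ρ_w(d) ≤ d ≤ c + ρ_w(c) ≤ d + ρ_w(d)` with `c ≠ d`
(written without truncated subtraction). -/
def Sqsub (w : List α) (c d : ℕ) : Prop :=
  c < d ∧ c + rho w d ≤ d ∧ d ≤ c + rho w c ∧ c + rho w c ≤ d + rho w d

/-- `𝓕_w(c)`: the maximum frontier over all palindrome chains from `c`
(a palindrome chain is a nonempty list starting at `c` whose consecutive
elements are related by `⊏_w`; its frontier is `e + ρ_w(e)` for its last element `e`). -/
noncomputable def maxFrontier (w : List α) (c : ℕ) : ℕ :=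
  sSup {f | ∃ l : List ℕ, l.head? = some c ∧ l.Chain' (Sqsub w) ∧
      ∃ e, l.getLast? = some e ∧ f = e + rho w e}

/-- `𝓐_w(d)`: the smallest position `c` with `c ≤ d ≤ 𝓕_w(c)`. -/
noncomputable def originator (w : List α) (d : ℕ) : ℕ :=
  sInf {c | 1 ≤ c ∧ c ≤ d ∧ d ≤ maxFrontier w c}

/-- A position `c` of a pp-irreducible string `w` is stable if `𝓕_w(c) < |w|`. -/
def Stable (w : List α) (c : ℕ) : Prop := maxFrontier w c < w.length

/-- `c` is strongly stable if every position in `[1:c]` is stable. -/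
def StronglyStable (w : List α) (c : ℕ) : Prop := ∀ e, 1 ≤ e → e ≤ c → Stable w e

/-- `T` is the output of an end-to-end walk on the path graph labeled `u`:
there are vertices `p 0 = 0, …, p |T| = |u|`, each `≤ |u|`, consecutive ones
adjacent, and `T[i] = u[max (p (i−1)) (p i)]` (1-based; here 0-based indexing). -/
def EndToEndWalkOutput (u T : List α) : Prop :=
  ∃ p : ℕ → ℕ, p 0 = 0 ∧ p T.length = u.length ∧
    (∀ i, i ≤ T.length → p i ≤ u.length) ∧
    (∀ i, i < T.length → p (i + 1) = p i + 1 ∨ p i = p (i + 1) + 1) ∧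
    (∀ i, i < T.length → T[i]? = u[max (p i) (p (i + 1)) - 1]?)

/-- `P` is accurate enough between `a` and `b`:
`min (P e) (b − e) = min (ρ_w e) (b − e)` for all `e ∈ [a:b]`. -/
def AccEnough (w : List α) (P : ℕ → ℕ) (a b : ℕ) : Prop :=
  ∀ e, a ≤ e → e ≤ b → min (P e) (b - e) = min (rho w e) (b - e)

open Classical in
/-- `ν_w(c)`: the largest `e` with `e ⊏_w c`, or `1` if there is none. -/
noncomputable def nu (w : List α) (c : ℕ) : ℕ :=
  if ∃ e, Sqsub w e c then sSup {e | Sqsub w e c} else 1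

/-- `c` is left-good w.r.t. `P` if `P` is accurate enough between `ν_w(c)` and `c`. -/
def LeftGood (w : List α) (P : ℕ → ℕ) (c : ℕ) : Prop := AccEnough w P (nu w c) c

/-- `c` is right-good w.r.t. `P` if `P` is accurate enough between `c` and `c + ρ_w(c)`. -/
def RightGood (w : List α) (P : ℕ → ℕ) (c : ℕ) : Prop := AccEnough w P c (c + rho w c)

section Lemmas
variable {α : Type*} (w : List α)

lemma palAt_zero {c : ℕ} (h : c ≤ w.length) : PalAt w c 0 :=
  ⟨Nat.zero_le c, by simpa using h, fun k hk hk' => by omega⟩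

lemma palAt_le {c r : ℕ} (h : PalAt w c r) : r ≤ c := h.1

lemma palAt_bdd (c : ℕ) : BddAbove {r | PalAt w c r} :=
  ⟨c, fun r hr => hr.1⟩

lemma palAt_rho {c : ℕ} (h : c ≤ w.length) : PalAt w c (rho w c) :=
  Nat.sSup_mem ⟨0, by exact palAt_zero w h⟩ (palAt_bdd w c)

lemma le_rho {c r : ℕ} (h : PalAt w c r) : r ≤ rho w c :=
  le_csSup (palAt_bdd w c) (by exact h)

lemma rho_eq_zero_of_gt {c : ℕ} (h : w.length < c) : rho w c = 0 := by
  have : {r | PalAt w c r} = (∅ : Set ℕ) := by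
    ext r; simp only [Set.mem_setOf_eq, Set.mem_empty_iff_false, iff_false]
    rintro ⟨h1, h2, -⟩; omega
  rw [rho, this, csSup_empty]; rfl

lemma rho_le (c : ℕ) : rho w c ≤ c := by
  by_cases h : c ≤ w.length
  · exact (palAt_rho w h).1
  · rw [rho_eq_zero_of_gt w (by omega)]; omega

lemma add_rho_le {c : ℕ} (h : c ≤ w.length) : c + rho w c ≤ w.length :=
  (palAt_rho w h).2.1

lemma rho_index {c k : ℕ} (h : c ≤ w.length) (h1 : 1 ≤ k) (h2 : k ≤ rho w c) :
    w[c - k]? = w[c + k - 1]? :=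
  (palAt_rho w h).2.2 k h1 h2

end Lemmas

section ZLemma
variable {α : Type*}

lemma rho_no_cross {w : List α} (hpp : PPIrreducible w) {c d : ℕ} (hcd : c < d)
    (hd : d ≤ c + rho w c) : c + rho w d ≤ d := by
  by_contra hcon
  push_neg at hcon
  set n := w.length with hn
  have hcn : c ≤ n := by
    by_contra h
    have := rho_eq_zero_of_gt w (c := c) (by omega)
    omega
  set s := d - c with hs
  have hs1 : 1 ≤ s := by omega
  have hp : s ≤ rho w c := by omega
  have hdn : d ≤ n := le_trans hd (add_rho_le w hcn)
  have hq : s + 1 ≤ rho w d := by omega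
  have hdq : d + rho w d ≤ n := add_rho_le w hdn
  have hds : d + s + 1 ≤ n := by omega
  have hsc : s ≤ c := le_trans hp (rho_le w c)
  set y : List α := (w.take c).drop (c - s) with hy
  have hylen : y.length = s := by
    simp only [hy, List.length_drop, List.length_take]
    omega
  have hyne : y ≠ [] := by
    intro h
    rw [h] at hylen
    simp at hylen
    omega
  have pal_c : ∀ i : ℕ, i + 1 ≤ rho w c → w[c - (i+1)]? = w[c + i]? := by
    intro i hi
    have := rho_index w hcn (k := i + 1) (by omega) hi
    simpa using this
  have pal_d : ∀ i : ℕ, i + 1 ≤ rho w d → w[d - (i+1)]? = w[d + i]? := by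
    intro i hi
    have := rho_index w hdn (k := i + 1) (by omega) hi
    simpa using this
  have hB : (w.take d).drop c = y.reverse := by
    apply List.ext_getElem?
    intro i
    rw [List.getElem?_drop]
    by_cases hi : i < s
    · have h1 : (w.take d)[c + i]? = w[c + i]? := by
        rw [List.getElem?_take, if_pos (by omega)]
      have h2 : y.reverse[i]? = y[s - 1 - i]? := by
        have hrl : i < y.reverse.length := by simp [hylen]; omega
        rw [List.getElem?_reverse (by simpa [hylen] using hi)]
        congr 1
        omega
      have h3 : y[s - 1 - i]? = w[c - 1 - i]? := by
        rw [hy, List.getElem?_drop, List.getElem?_take, if_pos (by omega)]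
        congr 1
        omega
      have h4 := pal_c i (by omega)
      rw [h1, h2, h3]
      rw [show c - (i+1) = c - 1 - i by omega] at h4
      exact h4.symm
    · have h1 : (w.take d)[c + i]? = none := by
        rw [List.getElem?_take, if_neg (by omega)]
      have h2 : y.reverse[i]? = none := by
        apply List.getElem?_eq_none
        simp [hylen]
        omega
      rw [h1, h2]
  have hC : (w.take (d + s)).drop d = y := by
    apply List.ext_getElem?
    intro i
    rw [List.getElem?_drop]
    by_cases hi : i < s
    · have h1 : (w.take (d + s))[d + i]? = w[d + i]? := by
        rw [List.getElem?_take, if_pos (by omega)]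
      have h2 : y[i]? = w[c - s + i]? := by
        rw [hy, List.getElem?_drop, List.getElem?_take, if_pos (by omega)]
      have h3 := pal_d i (by omega)
      have h4 := pal_c (s - i - 1) (by omega)
      rw [show d - (i+1) = c + (s - i - 1) by omega] at h3
      rw [show c - (s - i - 1 + 1) = c - s + i by omega,
          show c + (s - i - 1) = c + (s - i - 1) by rfl] at h4
      rw [h1, h2, ← h3, h4]
    · have h1 : (w.take (d + s))[d + i]? = none := by
        rw [List.getElem?_take, if_neg (by omega)]
      have h2 : y[i]? = none := by
        apply List.getElem?_eq_none
        omega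
      rw [h1, h2]
  have hdecomp : w.take (d + s) = ((w.take (c - s) ++ y) ++ y.reverse) ++ y := by
    have e1 : w.take (d + s) = w.take d ++ (w.take (d+s)).drop d := by
      conv_lhs => rw [← List.take_append_drop d (w.take (d + s))]
      rw [List.take_take, min_eq_left (by omega)]
    have e2 : w.take d = w.take c ++ (w.take d).drop c := by
      conv_lhs => rw [← List.take_append_drop c (w.take d)]
      rw [List.take_take, min_eq_left (by omega)]
    have e3 : w.take c = w.take (c - s) ++ y := by
      conv_lhs => rw [← List.take_append_drop (c - s) (w.take c)]
      rw [List.take_take, min_eq_left (by omega)]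
    rw [e1, e2, e3, hB, hC]
  have hkey : w.dropLast = w.take (c - s) ++ y ++ y.reverse ++ y ++ w.dropLast.drop (d + s) := by
    conv_lhs => rw [← List.take_append_drop (d + s) w.dropLast]
    have : w.dropLast.take (d + s) = w.take (d + s) := by
      rw [List.dropLast_eq_take, List.take_take, min_eq_left (by omega)]
    rw [this, hdecomp]
    try simp [List.append_assoc]
  exact hpp (w.take (c - s) ++ y ++ w.dropLast.drop (d + s))
    ⟨w.take (c - s), y, w.dropLast.drop (d + s), hyne, hkey, rfl⟩

end ZLemma

section Frontier
variable {α : Type*}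

/-- The set of frontiers of palindrome chains from `c`. -/
def frontierSet (w : List α) (c : ℕ) : Set ℕ :=
  {f | ∃ l : List ℕ, l.head? = some c ∧ l.Chain' (Sqsub w) ∧
      ∃ e, l.getLast? = some e ∧ f = e + rho w e}

lemma maxFrontier_eq (w : List α) (c : ℕ) : maxFrontier w c = sSup (frontierSet w c) := rfl

lemma chain_last_bound {w : List α} :
    ∀ l : List ℕ, l.Chain' (Sqsub w) → ∀ c e, l.head? = some c → l.getLast? = some e →
      c ≤ w.length → c ≤ e ∧ e + rho w e ≤ w.length := by
  intro l
  induction l with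
  | nil => intro _ c e hh; simp at hh
  | cons a t ih =>
    intro hch c e hh hl hc
    simp only [List.head?_cons, Option.some_inj] at hh
    subst hh
    match t with
    | [] =>
      simp only [List.getLast?_singleton, Option.some_inj] at hl
      subst hl
      exact ⟨le_refl _, add_rho_le w hc⟩
    | b :: t' =>
      simp only [List.Chain', List.isChain_cons_cons] at hch
      obtain ⟨hab, hch'⟩ := hch
      have hb : b ≤ w.length := le_trans hab.2.2.1 (add_rho_le w hc)
      rw [List.getLast?_cons_cons] at hl
      have := ih hch' b e rfl hl hb
      exact ⟨le_trans (le_of_lt hab.1) this.1, this.2⟩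

lemma frontierSet_self {w : List α} (c : ℕ) : c + rho w c ∈ frontierSet w c :=
  ⟨[c], rfl, List.isChain_singleton c, c, rfl, rfl⟩

lemma frontierSet_nonempty (w : List α) (c : ℕ) : (frontierSet w c).Nonempty :=
  ⟨c + rho w c, frontierSet_self c⟩

lemma frontierSet_bdd {w : List α} {c : ℕ} (hc : c ≤ w.length) :
    BddAbove (frontierSet w c) := by
  refine ⟨w.length, ?_⟩
  rintro f ⟨l, hh, hch, e, hl, rfl⟩
  exact (chain_last_bound l hch c e hh hl hc).2

lemma le_maxFrontier {w : List α} {c : ℕ} (hc : c ≤ w.length) :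
    c + rho w c ≤ maxFrontier w c :=
  le_csSup (frontierSet_bdd hc) (frontierSet_self c)

lemma self_le_maxFrontier {w : List α} {c : ℕ} (hc : c ≤ w.length) :
    c ≤ maxFrontier w c :=
  le_trans (Nat.le_add_right c _) (le_maxFrontier hc)

lemma maxFrontier_le {w : List α} {c : ℕ} (hc : c ≤ w.length) :
    maxFrontier w c ≤ w.length := by
  apply csSup_le (frontierSet_nonempty w c)
  rintro f ⟨l, hh, hch, e, hl, rfl⟩
  exact (chain_last_bound l hch c e hh hl hc).2

lemma maxFrontier_mem {w : List α} {c : ℕ} (hc : c ≤ w.length) :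
    maxFrontier w c ∈ frontierSet w c :=
  Nat.sSup_mem (frontierSet_nonempty w c) (frontierSet_bdd hc)

lemma frontierSet_mono {w : List α} {c d : ℕ} (hsq : Sqsub w c d) :
    frontierSet w d ⊆ frontierSet w c := by
  rintro f ⟨l, hh, hch, e, hl, rfl⟩
  match l, hh with
  | d :: t, hh =>
    simp only [List.head?_cons, Option.some_inj] at hh
    subst hh
    refine ⟨c :: d :: t, rfl, ?_, e, ?_, rfl⟩
    · simp only [List.Chain', List.isChain_cons_cons]
      exact ⟨hsq, hch⟩
    · rw [List.getLast?_cons_cons]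
      exact hl

lemma maxFrontier_mono_sq {w : List α} {c d : ℕ} (hsq : Sqsub w c d) (hc : c ≤ w.length) :
    maxFrontier w d ≤ maxFrontier w c :=
  csSup_le_csSup (frontierSet_bdd hc) (frontierSet_nonempty w d) (frontierSet_mono hsq)

lemma c_le_length_of_lt {w : List α} {c d : ℕ} (hcd : c < d) (hd : d ≤ c + rho w c) :
    c ≤ w.length := by
  by_contra h
  have := rho_eq_zero_of_gt w (c := c) (by omega)
  omega

lemma mono_M {w : List α} (hpp : PPIrreducible w) :
    ∀ m c d, c < d → d ≤ c + rho w c → w.length - d ≤ m →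
      maxFrontier w d ≤ maxFrontier w c := by
  intro m
  induction m with
  | zero =>
    intro c d hcd hd hm
    have hcn : c ≤ w.length := c_le_length_of_lt hcd hd
    have hdn : d ≤ w.length := le_trans hd (add_rho_le w hcn)
    by_cases hG : c + rho w c ≤ d + rho w d
    · exact maxFrontier_mono_sq ⟨hcd, rho_no_cross hpp hcd hd, hd, hG⟩ hcn
    · exfalso
      have h1 : d + rho w d ≤ w.length := add_rho_le w hdn
      have h2 : c + rho w c ≤ w.length := add_rho_le w hcn
      omega
  | succ m ih =>
    intro c d hcd hd hm
    have hcn : c ≤ w.length := c_le_length_of_lt hcd hd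
    have hdn : d ≤ w.length := le_trans hd (add_rho_le w hcn)
    by_cases hG : c + rho w c ≤ d + rho w d
    · exact maxFrontier_mono_sq ⟨hcd, rho_no_cross hpp hcd hd, hd, hG⟩ hcn
    · push_neg at hG
      apply csSup_le (frontierSet_nonempty w d)
      rintro f ⟨l, hh, hch, e, hl, rfl⟩
      match l, hh with
      | d :: t, hh =>
        simp only [List.head?_cons, Option.some_inj] at hh
        subst hh
        match t with
        | [] =>
          simp only [List.getLast?_singleton, Option.some_inj] at hl
          subst hl
          calc d + rho w d ≤ c + rho w c := le_of_lt hG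
            _ ≤ maxFrontier w c := le_maxFrontier hcn
        | d1 :: t' =>
          simp only [List.Chain', List.isChain_cons_cons] at hch
          obtain ⟨hdd1, hch'⟩ := hch
          rw [List.getLast?_cons_cons] at hl
          have hfd1 : e + rho w e ∈ frontierSet w d1 := ⟨d1 :: t', rfl, hch', e, hl, rfl⟩
          have hd1n : d1 ≤ w.length := le_trans hdd1.2.2.1 (add_rho_le w hdn)
          have h1 : e + rho w e ≤ maxFrontier w d1 := le_csSup (frontierSet_bdd hd1n) hfd1
          have h2 : maxFrontier w d1 ≤ maxFrontier w c := by
            have h3 := hdd1.2.2.1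
            have h4 := hdd1.1
            exact ih c d1 (lt_trans hcd h4) (by omega) (by omega)
          exact le_trans h1 h2

lemma mono_chain {w : List α} (hpp : PPIrreducible w) :
    ∀ l : List ℕ, l.Chain' (Sqsub w) → ∀ c e d, l.head? = some c →
      l.getLast? = some e → c ≤ d → d ≤ e + rho w e →
        maxFrontier w d ≤ maxFrontier w c := by
  intro l
  induction l with
  | nil => intro _ c e d hh; simp at hh
  | cons a t ih =>
    intro hch c e d hh hl hcd hde
    simp only [List.head?_cons, Option.some_inj] at hh
    subst hh
    match t with
    | [] =>
      simp only [List.getLast?_singleton, Option.some_inj] at hl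
      subst hl
      rcases eq_or_lt_of_le hcd with rfl | hlt
      · exact le_refl _
      · exact mono_M hpp w.length a d hlt hde (by omega)
    | b :: t' =>
      simp only [List.Chain', List.isChain_cons_cons] at hch
      obtain ⟨hab, hch'⟩ := hch
      rw [List.getLast?_cons_cons] at hl
      have hcn : a ≤ w.length := c_le_length_of_lt hab.1 hab.2.2.1
      by_cases hdc : d ≤ a + rho w a
      · rcases eq_or_lt_of_le hcd with rfl | hlt
        · exact le_refl _
        · exact mono_M hpp w.length a d hlt hdc (by omega)
      · push_neg at hdc
        have h1 : maxFrontier w d ≤ maxFrontier w b :=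
          ih hch' b e d rfl hl (by have := hab.2.2.1; omega) hde
        exact le_trans h1 (maxFrontier_mono_sq hab hcn)

lemma mono_F {w : List α} (hpp : PPIrreducible w) {c d : ℕ} (hc : c ≤ w.length)
    (hcd : c ≤ d) (hdF : d ≤ maxFrontier w c) :
    maxFrontier w d ≤ maxFrontier w c := by
  obtain ⟨l, hh, hch, e, hl, hf⟩ := maxFrontier_mem hc
  exact mono_chain hpp l hch c e d hh hl hcd (hf ▸ hdF)

end Frontier

section Bnd
variable {α : Type*}

/-- Canonical block boundaries. -/
noncomputable def bnd (w : List α) : ℕ → ℕ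
  | 0 => 0
  | (i+1) => maxFrontier w (bnd w i + 1)

lemma bnd_succ (w : List α) (i : ℕ) : bnd w (i+1) = maxFrontier w (bnd w i + 1) := rfl

lemma bnd_step {w : List α} {i : ℕ} (h : bnd w i < w.length) :
    bnd w i < bnd w (i+1) ∧ bnd w (i+1) ≤ w.length := by
  constructor
  · have := self_le_maxFrontier (w := w) (c := bnd w i + 1) (by omega)
    rw [bnd_succ]; omega
  · rw [bnd_succ]; exact maxFrontier_le (by omega)

lemma bnd_exists {w : List α} (hw : w ≠ []) : ∃ i, bnd w i = w.length := by
  have hn : 1 ≤ w.length := List.length_pos_iff.mpr hw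
  have key : ∀ i, (∃ j ≤ i, bnd w j = w.length) ∨ (i ≤ bnd w i ∧ bnd w i < w.length) := by
    intro i
    induction i with
    | zero => right; exact ⟨Nat.zero_le _, by rw [show bnd w 0 = 0 from rfl]; omega⟩
    | succ i ih =>
      rcases ih with ⟨j, hj, hje⟩ | ⟨h1, h2⟩
      · exact Or.inl ⟨j, by omega, hje⟩
      · have := bnd_step h2
        rcases eq_or_lt_of_le this.2 with h | h
        · exact Or.inl ⟨i + 1, le_refl _, h⟩
        · right; omega
  rcases key w.length with ⟨j, _, hje⟩ | ⟨h1, h2⟩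
  · exact ⟨j, hje⟩
  · omega

end Bnd

/-- every nonempty pp-irreducible string `w` is uniquely factorized as
`w = w₁ ⋯ w_k` into nonempty strings with `𝓕_w(b_{i−1}+1) = b_i` (where
`b_i = |w₁ ⋯ w_i|`), and for this factorization `𝓐_w(c) = b_{i−1}+1` whenever
`b_{i−1} < c ≤ b_i`. -/
theorem ppIrreducible_unique_factorization (w : List α) (hw : w ≠ [])
    (hpp : PPIrreducible w) :
    (∃! l : List (List α),
        l.flatten = w ∧ (∀ s ∈ l, s ≠ []) ∧
          ∀ i, i < l.length →
            maxFrontier w ((l.take i).flatten.length + 1) = (l.take (i + 1)).flatten.length) ∧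
      ∀ l : List (List α),
        (l.flatten = w ∧ (∀ s ∈ l, s ≠ []) ∧
            ∀ i, i < l.length →
              maxFrontier w ((l.take i).flatten.length + 1) = (l.take (i + 1)).flatten.length) →
          ∀ i, i < l.length → ∀ c, (l.take i).flatten.length < c →
            c ≤ (l.take (i + 1)).flatten.length →
              originator w c = (l.take i).flatten.length + 1 := by
  classical
  have hn1 : 1 ≤ w.length := List.length_pos_iff.mpr hw
  obtain hex := bnd_exists hw
  set k := Nat.find hex with hkdef
  have hk : bnd w k = w.length := Nat.find_spec hex
  have hmin : ∀ i, i < k → bnd w i ≠ w.length := fun i h => Nat.find_min hex h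
  have hble : ∀ i, i ≤ k → bnd w i ≤ w.length := by
    intro i hi
    induction i with
    | zero => simp [bnd]
    | succ i ih =>
      have h1 : bnd w i ≤ w.length := ih (by omega)
      have h2 : bnd w i ≠ w.length := hmin i (by omega)
      exact (bnd_step (by omega)).2
  have hblt : ∀ i, i < k → bnd w i < w.length := fun i hi =>
    lt_of_le_of_ne (hble i (le_of_lt hi)) (hmin i hi)
  have hstep : ∀ i, i < k → bnd w i < bnd w (i+1) := fun i hi => (bnd_step (hblt i hi)).1
  set f : ℕ → List α := fun i => (w.take (bnd w (i+1))).drop (bnd w i) with hf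
  have hflat : ∀ i, i ≤ k → ((List.range i).map f).flatten = w.take (bnd w i) := by
    intro i hi
    induction i with
    | zero => simp [bnd]
    | succ i ih =>
      rw [List.range_succ, List.map_append, List.flatten_append, ih (by omega)]
      simp only [List.map_cons, List.map_nil, List.flatten_cons, List.flatten_nil,
        List.append_nil, hf]
      conv_rhs => rw [← List.take_append_drop (bnd w i) (w.take (bnd w (i+1)))]
      rw [List.take_take, min_eq_left (le_of_lt (hstep i (by omega)))]
  set l : List (List α) := (List.range k).map f with hl
  have hlen : l.length = k := by simp [hl]
  have htake : ∀ i, i ≤ k → l.take i = (List.range i).map f := by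
    intro i hi
    rw [hl, ← List.map_take, List.take_range, min_eq_left hi]
  have hbl : ∀ i, i ≤ k → (l.take i).flatten = w.take (bnd w i) := fun i hi => by
    rw [htake i hi, hflat i hi]
  have hblen : ∀ i, i ≤ k → (l.take i).flatten.length = bnd w i := by
    intro i hi
    rw [hbl i hi, List.length_take]
    exact min_eq_left (hble i hi)
  have hP : l.flatten = w ∧ (∀ s ∈ l, s ≠ []) ∧
      ∀ i, i < l.length →
        maxFrontier w ((l.take i).flatten.length + 1) = (l.take (i + 1)).flatten.length := by
    refine ⟨?_, ?_, ?_⟩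
    · have h0 : l.take k = l := by rw [← hlen]; exact List.take_length
      have := hbl k (le_refl k)
      rw [h0, hk, List.take_length] at this
      exact this
    · intro s hs
      rw [hl, List.mem_map] at hs
      obtain ⟨i, hir, rfl⟩ := hs
      rw [List.mem_range] at hir
      intro hcon
      have := congrArg List.length hcon
      simp only [hf, List.length_drop, List.length_take, List.length_nil] at this
      have h1 := hstep i hir
      have h2 := hble (i+1) hir
      omega
    · intro i hi
      rw [hlen] at hi
      rw [hblen i (le_of_lt hi), hblen (i+1) hi]
      exact (bnd_succ w i).symm
  have hgen : ∀ l' : List (List α),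
      (l'.flatten = w ∧ (∀ s ∈ l', s ≠ []) ∧
        ∀ i, i < l'.length →
          maxFrontier w ((l'.take i).flatten.length + 1) = (l'.take (i + 1)).flatten.length) →
      (∀ i, i ≤ l'.length → (l'.take i).flatten.length = bnd w i) ∧ l'.length = k := by
    rintro l' ⟨h1, h2, h3⟩
    have hb' : ∀ i, i ≤ l'.length → (l'.take i).flatten.length = bnd w i := by
      intro i hi
      induction i with
      | zero => simp [bnd]
      | succ i ih =>
        have hih := ih (by omega)
        have h4 := h3 i (by omega)
        rw [hih] at h4
        rw [bnd_succ]
        exact h4.symm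
    have hstrict : ∀ i, i < l'.length →
        (l'.take i).flatten.length < (l'.take (i+1)).flatten.length := by
      intro i hi
      rw [List.take_succ, List.flatten_append, List.length_append,
        List.getElem?_eq_getElem hi]
      simp only [Option.toList_some, List.flatten_cons, List.flatten_nil, List.append_nil]
      have h5 : l'[i].length ≠ 0 := by
        intro h0
        exact (h2 _ (List.getElem_mem hi)) (List.length_eq_zero_iff.mp h0)
      omega
    have hm_n : (l'.take l'.length).flatten.length = w.length := by
      rw [List.take_length, h1]
    have hbm : bnd w l'.length = w.length := by
      rw [← hb' l'.length (le_refl _)]; exact hm_n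
    have hkm : k ≤ l'.length := Nat.find_le hbm
    have hmk : l'.length ≤ k := by
      by_contra hcon
      push_neg at hcon
      have h4 : (l'.take k).flatten.length = bnd w k := hb' k (by omega)
      have hlt : ∀ j, j ≤ l'.length → ∀ i, i < j →
          (l'.take i).flatten.length < (l'.take j).flatten.length := by
        intro j hj
        induction j with
        | zero => intro i hi; omega
        | succ j ih =>
          intro i hi
          rcases eq_or_lt_of_le (Nat.lt_succ_iff.mp hi) with rfl | h
          · exact hstrict i (by omega)
          · exact lt_trans (ih (by omega) i h) (hstrict j (by omega))
      have h6 := hlt l'.length (le_refl _) k hcon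
      rw [h4, hk, hm_n] at h6
      omega
    exact ⟨hb', by omega⟩
  have hFle : ∀ j, j ≤ k → ∀ e, 1 ≤ e → e ≤ bnd w j → maxFrontier w e ≤ bnd w j := by
    intro j hj
    induction j with
    | zero => intro e he1 he2; simp [bnd] at he2; omega
    | succ j ih =>
      intro e he1 he2
      by_cases hle : e ≤ bnd w j
      · exact le_trans (ih (by omega) e he1 hle) (le_of_lt (hstep j (by omega)))
      · push_neg at hle
        have h5 : maxFrontier w e ≤ maxFrontier w (bnd w j + 1) := by
          apply mono_F hpp (by have := hblt j (by omega); omega) (by omega)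
          rw [← bnd_succ]; exact he2
        rw [bnd_succ]
        exact h5
  constructor
  · refine ⟨l, hP, ?_⟩
    rintro l' hP'
    obtain ⟨hb', hlen'⟩ := hgen l' hP'
    obtain ⟨h1, h2, h3⟩ := hP'
    apply List.ext_getElem (by rw [hlen', hlen])
    intro i hi1 hi2
    have hik : i < k := by rwa [hlen] at hi2
    have hli : l[i] = f i := by
      simp [hl]
    have hpre : ∀ j, j ≤ l'.length → (l'.take j).flatten = w.take (bnd w j) := by
      intro j hj
      have hfl : (l'.take j).flatten ++ (l'.drop j).flatten = w := by
        rw [← List.flatten_append, List.take_append_drop, h1]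
      calc (l'.take j).flatten
          = ((l'.take j).flatten ++ (l'.drop j).flatten).take (bnd w j) :=
            (List.take_left' (hb' j hj)).symm
        _ = w.take (bnd w j) := by rw [hfl]
    have hsucc : (l'.take (i+1)).flatten = (l'.take i).flatten ++ l'[i] := by
      rw [List.take_succ, List.getElem?_eq_getElem hi1, Option.toList_some,
        List.flatten_append, List.flatten_cons, List.flatten_nil, List.append_nil]
    have hdec : w.take (bnd w (i+1)) = w.take (bnd w i) ++ l'[i] := by
      rw [← hpre (i+1) (by omega), hsucc, hpre i (by omega)]
    have hgi : l'[i] = (w.take (bnd w (i+1))).drop (bnd w i) := by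
      rw [hdec]
      rw [List.drop_left']
      rw [List.length_take]
      exact min_eq_left (hble i (by omega))
    rw [hgi, hli, hf]
  · rintro l' hP' i hi c hc1 hc2
    obtain ⟨hb', hlen'⟩ := hgen l' hP'
    have hik : i < k := by rwa [hlen'] at hi
    rw [hb' i (by omega)] at hc1 ⊢
    rw [hb' (i+1) (by omega)] at hc2
    have hcn : c ≤ w.length := le_trans hc2 (hble (i+1) hik)
    have hmem : bnd w i + 1 ∈ {c' | 1 ≤ c' ∧ c' ≤ c ∧ c ≤ maxFrontier w c'} := by
      refine ⟨by omega, by omega, ?_⟩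
      rw [← bnd_succ]; exact hc2
    show sInf _ = bnd w i + 1
    apply le_antisymm
    · exact Nat.sInf_le (by exact hmem)
    · have hin := Nat.sInf_mem (⟨bnd w i + 1, by exact hmem⟩ :
        Set.Nonempty {c' | 1 ≤ c' ∧ c' ≤ c ∧ c ≤ maxFrontier w c'})
      obtain ⟨g1, g2, g3⟩ := hin
      by_contra hcon
      push_neg at hcon
      have h7 := hFle i (by omega) _ g1 (by omega)
      omega
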